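/- Let H be a reproducing kernel Hilbert space with kernel k that is twice continuously differentiable, let f ∈ H with ‖f‖_H ≤ C, let D be a finite set of points with k(D,D) invertible, and define g(θ) = ∇k(θ, D) k(D,D)^{-1} f(D). Then ‖∇f(θ) − g(θ)‖² ≤ C² · Tr(∇k_D(θ,θ)∇^⊤), where ∇k_D(θ,θ)∇^⊤ is the posterior gradient covariance matrix with entries ∂_{θ_i}∂_{θ'_j}[k(θ,θ') − k(θ,D)k(D,D)^{-1}k(D,θ')]|_{θ'=θ}. -/

import Mathlib

open Finset Filter
open scoped RealInnerProductSpace Topology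

section RKHSAux

variable {d : ℕ}

local notation "EE" => EuclideanSpace ℝ (Fin d)

lemma line_hasDerivAt (κ : EE × EE → ℝ) (hκ : Differentiable ℝ κ)
    (p q : EE × EE) (s : ℝ) :
    HasDerivAt (fun t : ℝ => κ (p + t • q)) (fderiv ℝ κ (p + s • q) q) s := by
  have h1 : HasDerivAt (fun t : ℝ => p + t • q) q s := by
    simpa using ((hasDerivAt_id s).smul_const q).const_add p
  exact (hκ (p + s • q)).hasFDerivAt.comp_hasDerivAt s h1

lemma line_hasDerivAt2 (κ : EE × EE → ℝ) (hκ : ContDiff ℝ 2 κ)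
    (p q r : EE × EE) (s : ℝ) :
    HasDerivAt (fun t : ℝ => fderiv ℝ κ (p + t • q) r)
      (fderiv ℝ (fderiv ℝ κ) (p + s • q) q r) s := by
  have h1 : HasDerivAt (fun t : ℝ => p + t • q) q s := by
    simpa using ((hasDerivAt_id s).smul_const q).const_add p
  have hd2 : Differentiable ℝ (fderiv ℝ κ) :=
    (hκ.fderiv_right (m := 1) (le_refl _)).differentiable one_ne_zero
  have h2 : HasDerivAt (fun t : ℝ => fderiv ℝ κ (p + t • q))
      (fderiv ℝ (fderiv ℝ κ) (p + s • q) q) s :=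
    (hd2 (p + s • q)).hasFDerivAt.comp_hasDerivAt s h1
  simpa using h2.clm_apply (hasDerivAt_const s r)

/-- Double MVT estimate: the second mixed difference of a `C²` function is close to the
second derivative, with error uniform and quadratic. -/
lemma approx2 (κ : EE × EE → ℝ) (hκ : ContDiff ℝ 2 κ) (θ : EE) {ε : ℝ} (hε : 0 < ε) :
    ∃ δ > 0, ∀ a b : EE, ‖a‖ ≤ δ → ‖b‖ ≤ δ →
      |κ (θ + a, θ + b) - κ (θ + a, θ) - κ (θ, θ + b) + κ (θ, θ)
        - fderiv ℝ (fderiv ℝ κ) (θ, θ) (0, b) (a, 0)| ≤ ε * ‖a‖ * ‖b‖ := by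
  have hd1 : Differentiable ℝ κ := hκ.differentiable two_ne_zero
  have hBc : ContinuousAt (fderiv ℝ (fderiv ℝ κ)) (θ, θ) :=
    ((hκ.fderiv_right (m := 1) (le_refl _)).continuous_fderiv one_ne_zero).continuousAt
  replace hBc := (Metric.continuousAt_iff (α := EE × EE) (β := EE × EE →L[ℝ] EE × EE →L[ℝ] ℝ)).1 hBc
  obtain ⟨δ, hδpos, hδ⟩ := hBc ε hε
  refine ⟨δ / 2, by positivity, fun a b ha hb => ?_⟩
  -- first MVT in the first variable
  have hg : ∀ s : ℝ, HasDerivAt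
      (fun s : ℝ => κ ((θ, θ + b) + s • ((a, 0) : EE × EE)) - κ ((θ, θ) + s • ((a, 0) : EE × EE)))
      (fderiv ℝ κ ((θ, θ + b) + s • ((a, 0) : EE × EE)) (a, 0)
        - fderiv ℝ κ ((θ, θ) + s • ((a, 0) : EE × EE)) (a, 0)) s := by
    intro s
    exact (line_hasDerivAt κ hd1 (θ, θ + b) (a, 0) s).sub (line_hasDerivAt κ hd1 (θ, θ) (a, 0) s)
  obtain ⟨σ, hσmem, hσ⟩ := exists_hasDerivAt_eq_slope _ _ one_pos
    (fun s _ => (hg s).continuousAt.continuousWithinAt) (fun s _ => hg s)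
  -- second MVT in the second variable
  have hh : ∀ t : ℝ, HasDerivAt
      (fun t : ℝ => fderiv ℝ κ ((θ + σ • a, θ) + t • ((0, b) : EE × EE)) (a, 0))
      (fderiv ℝ (fderiv ℝ κ) ((θ + σ • a, θ) + t • ((0, b) : EE × EE)) (0, b) (a, 0)) t :=
    fun t => line_hasDerivAt2 κ hκ (θ + σ • a, θ) (0, b) (a, 0) t
  obtain ⟨τ, hτmem, hτ⟩ := exists_hasDerivAt_eq_slope _ _ one_pos
    (fun t _ => (hh t).continuousAt.continuousWithinAt) (fun t _ => hh t)
  simp only [one_smul, zero_smul, add_zero, Prod.smul_mk, Prod.mk_add_mk, smul_zero,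
    sub_zero, div_one] at hσ hτ
  have key : κ (θ + a, θ + b) - κ (θ + a, θ) - κ (θ, θ + b) + κ (θ, θ)
      = fderiv ℝ (fderiv ℝ κ) (θ + σ • a, θ + τ • b) (0, b) (a, 0) := by
    rw [hτ, hσ]; ring
  have hdist : dist ((θ + σ • a, θ + τ • b) : EE × EE) ((θ, θ) : EE × EE) < δ := by
    rw [Prod.dist_eq]
    have hσ1 : |σ| ≤ 1 := by
      rcases hσmem with ⟨h0, h1'⟩
      rw [abs_le]; constructor <;> nlinarith
    have hτ1 : |τ| ≤ 1 := by
      rcases hτmem with ⟨h0, h1'⟩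
      rw [abs_le]; constructor <;> nlinarith
    have d1 : dist (θ + σ • a) θ < δ := by
      rw [dist_eq_norm, add_sub_cancel_left, norm_smul, Real.norm_eq_abs]
      nlinarith [norm_nonneg a, abs_nonneg σ]
    have d2 : dist (θ + τ • b) θ < δ := by
      rw [dist_eq_norm, add_sub_cancel_left, norm_smul, Real.norm_eq_abs]
      nlinarith [norm_nonneg b, abs_nonneg τ]
    exact max_lt d1 d2
  have hBnear : ‖fderiv ℝ (fderiv ℝ κ) (θ + σ • a, θ + τ • b) - fderiv ℝ (fderiv ℝ κ) (θ, θ)‖ ≤ ε := by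
    have := hδ hdist
    rw [dist_eq_norm (E := EE × EE →L[ℝ] EE × EE →L[ℝ] ℝ)] at this
    exact this.le
  rw [key]
  have expand : fderiv ℝ (fderiv ℝ κ) (θ + σ • a, θ + τ • b) (0, b) (a, 0)
      - fderiv ℝ (fderiv ℝ κ) (θ, θ) (0, b) (a, 0)
      = ((fderiv ℝ (fderiv ℝ κ) (θ + σ • a, θ + τ • b) - fderiv ℝ (fderiv ℝ κ) (θ, θ)) (0, b)) (a, 0) := by
    simp [ContinuousLinearMap.sub_apply]
  rw [expand]
  have hle := ((fderiv ℝ (fderiv ℝ κ) (θ + σ • a, θ + τ • b) - fderiv ℝ (fderiv ℝ κ) (θ, θ))).le_opNorm₂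
    ((0 : EE), b) (a, (0 : EE))
  have hn1 : ‖(((0 : EE), b) : EE × EE)‖ = ‖b‖ := by simp [Prod.norm_def]
  have hn2 : ‖((a, (0 : EE)) : EE × EE)‖ = ‖a‖ := by simp [Prod.norm_def]
  rw [hn1, hn2] at hle
  calc |((fderiv ℝ (fderiv ℝ κ) (θ + σ • a, θ + τ • b) - fderiv ℝ (fderiv ℝ κ) (θ, θ)) (0, b)) (a, 0)|
      ≤ ‖fderiv ℝ (fderiv ℝ κ) (θ + σ • a, θ + τ • b) - fderiv ℝ (fderiv ℝ κ) (θ, θ)‖ * ‖b‖ * ‖a‖ := hle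
    _ ≤ ε * ‖b‖ * ‖a‖ :=
        mul_le_mul_of_nonneg_right (mul_le_mul_of_nonneg_right hBnear (norm_nonneg b))
          (norm_nonneg a)
    _ = ε * ‖a‖ * ‖b‖ := by ring


lemma approxR (κ : EE × EE → ℝ) (hκ : ContDiff ℝ 2 κ) (θ : EE) {ε : ℝ} (hε : 0 < ε) :
    ∃ δ > 0, ∀ a : EE, ‖a‖ ≤ δ →
      |fderiv ℝ κ (θ + a, θ) (0, a) - fderiv ℝ κ (θ, θ) (0, a)
        - fderiv ℝ (fderiv ℝ κ) (θ, θ) (0, a) (a, 0)| ≤ ε * ‖a‖ * ‖a‖ := by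
  have hBc : ContinuousAt (fderiv ℝ (fderiv ℝ κ)) (θ, θ) :=
    ((hκ.fderiv_right (m := 1) (le_refl _)).continuous_fderiv one_ne_zero).continuousAt
  replace hBc := (Metric.continuousAt_iff (α := EE × EE) (β := EE × EE →L[ℝ] EE × EE →L[ℝ] ℝ)).1 hBc
  obtain ⟨δ, hδpos, hδ⟩ := hBc ε hε
  refine ⟨δ / 2, by positivity, fun a ha => ?_⟩
  have hh : ∀ s : ℝ, HasDerivAt
      (fun s : ℝ => fderiv ℝ κ ((θ, θ) + s • ((a, 0) : EE × EE)) (0, a))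
      (fderiv ℝ (fderiv ℝ κ) ((θ, θ) + s • ((a, 0) : EE × EE)) (a, 0) (0, a)) s :=
    fun s => line_hasDerivAt2 κ hκ (θ, θ) (a, 0) (0, a) s
  obtain ⟨σ, hσmem, hσ⟩ := exists_hasDerivAt_eq_slope _ _ one_pos
    (fun s _ => (hh s).continuousAt.continuousWithinAt) (fun s _ => hh s)
  simp only [one_smul, zero_smul, add_zero, Prod.smul_mk, Prod.mk_add_mk, smul_zero,
    sub_zero, div_one] at hσ
  -- symmetry of the second derivative
  have hsymm : fderiv ℝ (fderiv ℝ κ) (θ, θ) (0, a) (a, 0)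
      = fderiv ℝ (fderiv ℝ κ) (θ, θ) ((a, 0) : EE × EE) ((0, a) : EE × EE) := by
    have hf : ∀ y, HasFDerivAt κ (fderiv ℝ κ y) y :=
      fun y => ((hκ.differentiable two_ne_zero) y).hasFDerivAt
    have hx : HasFDerivAt (fderiv ℝ κ) (fderiv ℝ (fderiv ℝ κ) (θ, θ)) (θ, θ) :=
      (((hκ.fderiv_right (m := 1) (le_refl _)).differentiable one_ne_zero) (θ, θ)).hasFDerivAt
    exact second_derivative_symmetric hf hx _ _
  rw [hsymm, ← hσ]
  have hdist : dist ((θ + σ • a, θ) : EE × EE) ((θ, θ) : EE × EE) < δ := by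
    rw [Prod.dist_eq]
    have hσ1 : |σ| ≤ 1 := by
      rcases hσmem with ⟨h0, h1'⟩
      rw [abs_le]; constructor <;> nlinarith
    have d1 : dist (θ + σ • a) θ < δ := by
      rw [dist_eq_norm, add_sub_cancel_left, norm_smul, Real.norm_eq_abs]
      nlinarith [norm_nonneg a, abs_nonneg σ]
    have d2 : dist θ θ < δ := by simpa using hδpos
    exact max_lt d1 d2
  have hBnear : ‖fderiv ℝ (fderiv ℝ κ) (θ + σ • a, θ) - fderiv ℝ (fderiv ℝ κ) (θ, θ)‖ ≤ ε := by
    have := hδ hdist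
    rw [dist_eq_norm (E := EE × EE →L[ℝ] EE × EE →L[ℝ] ℝ)] at this
    exact this.le
  have expand : fderiv ℝ (fderiv ℝ κ) (θ + σ • a, θ) (a, 0) (0, a)
      - fderiv ℝ (fderiv ℝ κ) (θ, θ) (a, 0) (0, a)
      = ((fderiv ℝ (fderiv ℝ κ) (θ + σ • a, θ) - fderiv ℝ (fderiv ℝ κ) (θ, θ)) (a, 0)) (0, a) := by
    simp [ContinuousLinearMap.sub_apply]
  rw [expand]
  have hle := ((fderiv ℝ (fderiv ℝ κ) (θ + σ • a, θ) - fderiv ℝ (fderiv ℝ κ) (θ, θ))).le_opNorm₂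
    (a, (0 : EE)) ((0 : EE), a)
  have hn1 : ‖((a, (0 : EE)) : EE × EE)‖ = ‖a‖ := by simp [Prod.norm_def]
  have hn2 : ‖(((0 : EE), a) : EE × EE)‖ = ‖a‖ := by simp [Prod.norm_def]
  rw [hn1, hn2] at hle
  calc |((fderiv ℝ (fderiv ℝ κ) (θ + σ • a, θ) - fderiv ℝ (fderiv ℝ κ) (θ, θ)) (a, 0)) (0, a)|
      ≤ ‖fderiv ℝ (fderiv ℝ κ) (θ + σ • a, θ) - fderiv ℝ (fderiv ℝ κ) (θ, θ)‖ * ‖a‖ * ‖a‖ := hle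
    _ ≤ ε * ‖a‖ * ‖a‖ := by
        have := mul_le_mul_of_nonneg_right
          (mul_le_mul_of_nonneg_right hBnear (norm_nonneg a)) (norm_nonneg a)
        linarith

lemma eucl_repr (h : EE) : ∑ i, h i • EuclideanSpace.single i (1:ℝ) = h := by
  have := (EuclideanSpace.basisFun (Fin d) ℝ).sum_repr h
  simpa [EuclideanSpace.basisFun_apply, EuclideanSpace.basisFun_repr] using this

lemma tn_tendsto : Tendsto (fun n : ℕ => ((n : ℝ) + 1)⁻¹) atTop (𝓝[≠] (0:ℝ)) := by
  refine tendsto_nhdsWithin_of_tendsto_nhds_of_eventually_within _ ?_ ?_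
  · simpa [one_div] using tendsto_one_div_add_atTop_nhds_zero_nat (𝕜 := ℝ)
  · filter_upwards with n
    have : (0:ℝ) < ((n : ℝ) + 1)⁻¹ := by positivity
    exact fun hne => absurd hne this.ne'

set_option maxHeartbeats 2000000 in
/-- The feature map of a `C²` kernel, valued in a complete inner-product space,
is Fréchet differentiable, and the derivative pairs with features via derivatives
of the kernel. -/
lemma feature_hasFDerivAt {V : Type*} [NormedAddCommGroup V] [InnerProductSpace ℝ V]
    [CompleteSpace V] (κ : EE × EE → ℝ) (hκ : ContDiff ℝ 2 κ)
    (Ψ : EE → V) (hΨ : ∀ x y, ⟪Ψ x, Ψ y⟫ = κ (x, y)) (θ : EE) :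
    ∃ L : EE →L[ℝ] V, HasFDerivAt Ψ L θ := by
  classical
  set e : Fin d → EE := fun i => EuclideanSpace.single i (1:ℝ) with he
  set tn : ℕ → ℝ := fun n => ((n : ℝ) + 1)⁻¹ with htn
  have htnpos : ∀ n, 0 < tn n := fun n => by positivity
  set N : EE → EE → ℝ := fun a b =>
    κ (θ + a, θ + b) - κ (θ + a, θ) - κ (θ, θ + b) + κ (θ, θ) with hNdef
  have hN : ∀ a b : EE, ⟪Ψ (θ + a) - Ψ θ, Ψ (θ + b) - Ψ θ⟫ = N a b := by
    intro a b
    simp only [inner_sub_left, inner_sub_right, hΨ, hNdef]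
    ring
  set M : EE → EE → ℝ := fun a b => fderiv ℝ (fderiv ℝ κ) (θ, θ) (0, b) (a, 0) with hMdef
  have hMsmul : ∀ (s t : ℝ) (a b : EE), M (s • a) (t • b) = s * t * M a b := by
    intro s t a b
    have h1 : ((0 : EE), t • b) = t • (((0 : EE), b) : EE × EE) := by
      simp [Prod.smul_mk]
    have h2 : ((s • a, (0 : EE)) : EE × EE) = s • ((a, (0 : EE)) : EE × EE) := by
      simp [Prod.smul_mk]
    simp only [hMdef, h1, h2, map_smul, ContinuousLinearMap.smul_apply, smul_eq_mul]
    ring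
  -- the sequence of difference quotients in direction `e i`
  set q : ℕ → Fin d → V := fun n i => (tn n)⁻¹ • (Ψ (θ + tn n • e i) - Ψ θ) with hq
  have hinner_qq : ∀ (n m : ℕ) (i j : Fin d),
      ⟪q n i, q m j⟫ = (tn n)⁻¹ * (tn m)⁻¹ * N (tn n • e i) (tn m • e j) := by
    intro n m i j
    rw [hq]
    simp only [real_inner_smul_left, real_inner_smul_right]
    rw [hN]
    ring
  have hnorme : ∀ i, ‖e i‖ = 1 := by
    intro i; rw [he]; simp [EuclideanSpace.norm_single]
  -- quantitative estimate for inner products of difference quotients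
  have hquant : ∀ ε > (0:ℝ), ∃ δ > (0:ℝ), ∀ (n m : ℕ) (i j : Fin d),
      tn n ≤ δ → tn m ≤ δ → |⟪q n i, q m j⟫ - M (e i) (e j)| ≤ ε := by
    intro ε hε
    obtain ⟨δ, hδpos, hδ⟩ := approx2 κ hκ θ hε
    refine ⟨δ, hδpos, fun n m i j hn hm => ?_⟩
    have hna : ‖tn n • e i‖ ≤ δ := by
      rw [norm_smul, Real.norm_eq_abs, abs_of_pos (htnpos n), hnorme, mul_one]; exact hn
    have hmb : ‖tn m • e j‖ ≤ δ := by
      rw [norm_smul, Real.norm_eq_abs, abs_of_pos (htnpos m), hnorme, mul_one]; exact hm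
    have hest' : |N (tn n • e i) (tn m • e j) - M (tn n • e i) (tn m • e j)|
        ≤ ε * ‖tn n • e i‖ * ‖tn m • e j‖ := hδ _ _ hna hmb
    have hns : ‖tn n • e i‖ = tn n := by
      rw [norm_smul, Real.norm_eq_abs, abs_of_pos (htnpos n), hnorme, mul_one]
    have hms : ‖tn m • e j‖ = tn m := by
      rw [norm_smul, Real.norm_eq_abs, abs_of_pos (htnpos m), hnorme, mul_one]
    rw [hns, hms] at hest'
    have hMeq : M (tn n • e i) (tn m • e j) = tn n * tn m * M (e i) (e j) := hMsmul _ _ _ _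
    have hx := (htnpos n).ne'
    have hy := (htnpos m).ne'
    have h2 : |⟪q n i, q m j⟫ - M (e i) (e j)|
        = (tn n)⁻¹ * (tn m)⁻¹ * |N (tn n • e i) (tn m • e j) - M (tn n • e i) (tn m • e j)| := by
      rw [hinner_qq]
      have hrw : (tn n)⁻¹ * (tn m)⁻¹ * N (tn n • e i) (tn m • e j) - M (e i) (e j)
          = (tn n)⁻¹ * (tn m)⁻¹ * (N (tn n • e i) (tn m • e j) - M (tn n • e i) (tn m • e j)) := by
        rw [hMeq, mul_sub]
        field_simp
      rw [hrw, abs_mul, abs_of_pos (show (0:ℝ) < (tn n)⁻¹ * (tn m)⁻¹ by positivity)]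
    rw [h2]
    calc (tn n)⁻¹ * (tn m)⁻¹ * |N (tn n • e i) (tn m • e j) - M (tn n • e i) (tn m • e j)|
        ≤ (tn n)⁻¹ * (tn m)⁻¹ * (ε * tn n * tn m) :=
          mul_le_mul_of_nonneg_left hest' (by positivity)
      _ = ε := by field_simp
  -- small parameters eventually
  have htn0 : Tendsto tn atTop (𝓝 0) := by
    rw [htn]; simpa [one_div] using tendsto_one_div_add_atTop_nhds_zero_nat (𝕜 := ℝ)
  have htn_small : ∀ δ : ℝ, 0 < δ → ∃ Nn : ℕ, ∀ p ≥ Nn, tn p ≤ δ := by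
    intro δ hδ
    obtain ⟨Nn, hNn⟩ := (Metric.tendsto_atTop.1 htn0) δ hδ
    refine ⟨Nn, fun p hp => ?_⟩
    have := hNn p hp
    rw [Real.dist_eq, sub_zero, abs_of_pos (htnpos p)] at this
    exact this.le
  -- Cauchy
  have hcauchy : ∀ i : Fin d, CauchySeq (fun n => q n i) := by
    intro i
    rw [Metric.cauchySeq_iff]
    intro ε hε
    have hε5 : (0:ℝ) < ε ^ 2 / 5 := by positivity
    obtain ⟨δ, hδpos, hδ⟩ := hquant _ hε5
    obtain ⟨Nn, hNn⟩ := htn_small δ hδpos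
    refine ⟨Nn, fun m hm n hn => ?_⟩
    have e1 := abs_le.1 (hδ m m i i (hNn m hm) (hNn m hm))
    have e2 := abs_le.1 (hδ m n i i (hNn m hm) (hNn n hn))
    have e3 := abs_le.1 (hδ n n i i (hNn n hn) (hNn n hn))
    rw [dist_eq_norm]
    have hsq : ‖q m i - q n i‖ ^ 2
        = ⟪q m i, q m i⟫ - 2 * ⟪q m i, q n i⟫ + ⟪q n i, q n i⟫ := by
      rw [norm_sub_sq_real, real_inner_self_eq_norm_sq, real_inner_self_eq_norm_sq]
    nlinarith [norm_nonneg (q m i - q n i), e1.1, e1.2, e2.1, e2.2, e3.1, e3.2, hsq, hε]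
  have hUlim : ∀ i : Fin d, ∃ v : V, Tendsto (fun n => q n i) atTop (𝓝 v) :=
    fun i => cauchySeq_tendsto_of_complete (hcauchy i)
  choose u hu using hUlim
  -- inner products of the limits
  have hBid : ∀ i j, ⟪u i, u j⟫ = M (e i) (e j) := by
    intro i j
    have h1 : Tendsto (fun n => ⟪q n i, q n j⟫) atTop (𝓝 ⟪u i, u j⟫) := (hu i).inner (hu j)
    have h2 : Tendsto (fun n => ⟪q n i, q n j⟫) atTop (𝓝 (M (e i) (e j))) := by
      rw [Metric.tendsto_atTop]
      intro ε hε
      obtain ⟨δ, hδpos, hδ⟩ := hquant (ε/2) (by positivity)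
      obtain ⟨Nn, hNn⟩ := htn_small δ hδpos
      refine ⟨Nn, fun n hn => ?_⟩
      rw [Real.dist_eq]
      exact lt_of_le_of_lt (hδ n n i j (hNn n hn) (hNn n hn)) (by linarith)
    exact tendsto_nhds_unique h1 h2
  -- pairing of the limits with features
  have hAid : ∀ (x : EE) (i : Fin d), ⟪Ψ x, u i⟫ = fderiv ℝ κ (x, θ) (0, e i) := by
    intro x i
    have h1 : Tendsto (fun n => ⟪Ψ x, q n i⟫) atTop (𝓝 ⟪Ψ x, u i⟫) :=
      (tendsto_const_nhds).inner (hu i)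
    have hg : HasDerivAt (fun t : ℝ => κ ((x, θ) + t • (((0 : EE), e i) : EE × EE)))
        (fderiv ℝ κ ((x, θ) + (0:ℝ) • (((0 : EE), e i) : EE × EE)) (0, e i)) 0 :=
      line_hasDerivAt κ (hκ.differentiable two_ne_zero) _ _ 0
    rw [zero_smul, add_zero] at hg
    have hslope := hasDerivAt_iff_tendsto_slope.1 hg
    have h2 : Tendsto (fun n => slope (fun t : ℝ => κ ((x, θ) + t • (((0 : EE), e i) : EE × EE)))
        0 (tn n)) atTop (𝓝 (fderiv ℝ κ (x, θ) (0, e i))) := hslope.comp tn_tendsto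
    have heq : (fun n => slope (fun t : ℝ => κ ((x, θ) + t • (((0 : EE), e i) : EE × EE))) 0 (tn n))
        = fun n => ⟪Ψ x, q n i⟫ := by
      funext n
      rw [slope_def_field]
      have hp1 : ((x, θ) : EE × EE) + tn n • (((0 : EE), e i) : EE × EE)
          = (x, θ + tn n • e i) := by
        simp [Prod.smul_mk, Prod.mk_add_mk]
      have hp0 : ((x, θ) : EE × EE) + (0:ℝ) • (((0 : EE), e i) : EE × EE) = (x, θ) := by
        simp
      rw [hp1, hp0]
      have : ⟪Ψ x, q n i⟫ = (tn n)⁻¹ * (κ (x, θ + tn n • e i) - κ (x, θ)) := by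
        rw [hq]
        simp only [real_inner_smul_right, inner_sub_right, hΨ]
      rw [this]
      field_simp
      rw [sub_zero]
    rw [heq] at h2
    exact tendsto_nhds_unique h1 h2
  -- the candidate derivative
  set L : EE →L[ℝ] V := ∑ i, (EuclideanSpace.proj i).smulRight (u i) with hL
  have hLapply : ∀ h : EE, L h = ∑ i, h i • u i := by
    intro h
    rw [hL]
    simp [ContinuousLinearMap.sum_apply, ContinuousLinearMap.smulRight_apply]
  have hdecomp2 : ∀ h : EE, (((0 : EE), h) : EE × EE) = ∑ i, h i • (((0 : EE), e i) : EE × EE) := by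
    intro h
    rw [Prod.ext_iff]
    refine ⟨by rw [Prod.fst_sum]; simp, ?_⟩
    rw [Prod.snd_sum]
    rw [he]
    simpa using (eucl_repr h).symm
  have hdecomp1 : ∀ h : EE, ((h, (0 : EE)) : EE × EE) = ∑ i, h i • ((e i, (0 : EE)) : EE × EE) := by
    intro h
    rw [Prod.ext_iff]
    refine ⟨?_, by rw [Prod.snd_sum]; simp⟩
    rw [Prod.fst_sum]
    rw [he]
    simpa using (eucl_repr h).symm
  have hpair : ∀ (x : EE) (h : EE), ⟪Ψ x, L h⟫ = fderiv ℝ κ (x, θ) (0, h) := by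
    intro x h
    rw [hLapply, inner_sum]
    rw [show (((0 : EE), h) : EE × EE) = ∑ i, h i • (((0 : EE), e i) : EE × EE) from hdecomp2 h,
      map_sum]
    refine Finset.sum_congr rfl fun i _ => ?_
    rw [real_inner_smul_right, hAid, map_smul, smul_eq_mul]
  have hui_pair : ∀ (i : Fin d) (h : EE),
      ⟪u i, ∑ j, h j • u j⟫ = fderiv ℝ (fderiv ℝ κ) (θ, θ) (0, h) (e i, 0) := by
    intro i h
    rw [inner_sum]
    rw [show (((0 : EE), h) : EE × EE) = ∑ j, h j • (((0 : EE), e j) : EE × EE) from hdecomp2 h,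
      map_sum, ContinuousLinearMap.sum_apply]
    refine Finset.sum_congr rfl fun j _ => ?_
    rw [real_inner_smul_right, hBid, map_smul, ContinuousLinearMap.smul_apply, smul_eq_mul]
  have hpair2 : ∀ g h : EE, ⟪L g, L h⟫ = fderiv ℝ (fderiv ℝ κ) (θ, θ) (0, h) (g, 0) := by
    intro g h
    rw [hLapply, hLapply, sum_inner]
    rw [show ((g, (0 : EE)) : EE × EE) = ∑ i, g i • ((e i, (0 : EE)) : EE × EE) from hdecomp1 g,
      map_sum]
    refine Finset.sum_congr rfl fun i _ => ?_
    rw [real_inner_smul_left, hui_pair, map_smul, smul_eq_mul]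
  -- Fréchet differentiability
  refine ⟨L, ?_⟩
  rw [hasFDerivAt_iff_isLittleO_nhds_zero, Asymptotics.isLittleO_iff]
  intro c hc
  have hc3 : (0:ℝ) < c ^ 2 / 3 := by positivity
  obtain ⟨δ₁, hδ₁, hB1⟩ := approx2 κ hκ θ hc3
  obtain ⟨δ₂, hδ₂, hB2⟩ := approxR κ hκ θ hc3
  have hmem : Metric.closedBall (0 : EE) (min δ₁ δ₂) ∈ 𝓝 (0 : EE) :=
    Metric.closedBall_mem_nhds _ (by positivity)
  filter_upwards [hmem] with h hh
  rw [mem_closedBall_zero_iff] at hh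
  have hh1 : ‖h‖ ≤ δ₁ := le_trans hh (min_le_left _ _)
  have hh2 : ‖h‖ ≤ δ₂ := le_trans hh (min_le_right _ _)
  have hnormsq : ‖Ψ (θ + h) - Ψ θ - L h‖ ^ 2
      = N h h - 2 * (fderiv ℝ κ (θ + h, θ) (0, h) - fderiv ℝ κ (θ, θ) (0, h)) + M h h := by
    rw [norm_sub_sq_real]
    have h1 : ‖Ψ (θ + h) - Ψ θ‖ ^ 2 = N h h := by rw [← real_inner_self_eq_norm_sq, hN]
    have h2 : ⟪Ψ (θ + h) - Ψ θ, L h⟫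
        = fderiv ℝ κ (θ + h, θ) (0, h) - fderiv ℝ κ (θ, θ) (0, h) := by
      rw [inner_sub_left, hpair, hpair]
    have h3 : ‖L h‖ ^ 2 = M h h := by rw [← real_inner_self_eq_norm_sq, hpair2]
    rw [h1, h2, h3]
  have e1 : |N h h - M h h| ≤ c ^ 2 / 3 * ‖h‖ * ‖h‖ := hB1 h h hh1 hh1
  have e2 : |fderiv ℝ κ (θ + h, θ) (0, h) - fderiv ℝ κ (θ, θ) (0, h) - M h h|
      ≤ c ^ 2 / 3 * ‖h‖ * ‖h‖ := hB2 h hh2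
  have hbound : ‖Ψ (θ + h) - Ψ θ - L h‖ ^ 2 ≤ (c * ‖h‖) ^ 2 := by
    have e1' := abs_le.1 e1
    have e2' := abs_le.1 e2
    rw [hnormsq]
    have hsq : (c * ‖h‖) ^ 2 = c ^ 2 / 3 * ‖h‖ * ‖h‖ + 2 * (c ^ 2 / 3 * ‖h‖ * ‖h‖) := by ring
    clear_value N M
    linarith [e1'.2, e2'.1, hsq]
  have hfin : ‖Ψ (θ + h) - Ψ θ - L h‖ ≤ c * ‖h‖ := by
    have hs := Real.sqrt_le_sqrt hbound
    rwa [Real.sqrt_sq (norm_nonneg _), Real.sqrt_sq (mul_nonneg hc.le (norm_nonneg h))] at hs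
  simpa using hfin

end RKHSAux

lemma key_ineq {b : ℕ} {V : Type*} [NormedAddCommGroup V] [InnerProductSpace ℝ V]
    (P : Fin b → V) (K : Matrix (Fin b) (Fin b) ℝ) (hKP : ∀ j l, K j l = ⟪P j, P l⟫)
    [Invertible K] (w u : V) (C : ℝ) (hw : ‖w‖ ≤ C) :
    (⟪w, u⟫ - ∑ j, ⟪P j, u⟫ * (K⁻¹.mulVec fun l => ⟪w, P l⟫) j) ^ 2
      ≤ C ^ 2 * (⟪u, u⟫ - ∑ j, ∑ l, ⟪P j, u⟫ * K⁻¹ j l * ⟪P l, u⟫) := by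
  classical
  set v : Fin b → ℝ := fun j => ⟪P j, u⟫ with hv
  set c : Fin b → ℝ := fun l => ∑ j, v j * K⁻¹ j l with hc
  set s : V := ∑ l, c l • P l with hs
  set S : ℝ := ∑ j, ∑ l, v j * K⁻¹ j l * v l with hS
  have hKsym : ∀ j l, K j l = K l j := fun j l => by
    rw [hKP, hKP, real_inner_comm]
  have hinv : K⁻¹ * K = 1 := Matrix.nonsing_inv_mul K (Matrix.isUnit_det_of_invertible K)
  -- ⟪u, s⟫ = S
  have hus : ⟪u, s⟫ = S := by
    rw [hs, inner_sum, hS]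
    rw [Finset.sum_comm]
    refine Finset.sum_congr rfl fun l _ => ?_
    rw [real_inner_smul_right, hc]
    have : ⟪u, P l⟫ = v l := by rw [hv, real_inner_comm]
    rw [this, Finset.sum_mul]
  -- ⟪s, s⟫ = S
  have hss : ⟪s, s⟫ = S := by
    have hcv : ∀ l, ∑ m, c m * K l m = v l := by
      intro l
      have : ∀ m, c m * K l m = ∑ j, v j * (K⁻¹ j m * K m l) := by
        intro m
        rw [hc, Finset.sum_mul, hKsym l m]
        exact Finset.sum_congr rfl fun j _ => by ring
      rw [Finset.sum_congr rfl fun m _ => this m, Finset.sum_comm]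
      have : ∀ j, ∑ m, v j * (K⁻¹ j m * K m l) = v j * (K⁻¹ * K) j l := by
        intro j
        rw [Matrix.mul_apply, Finset.mul_sum]
      rw [Finset.sum_congr rfl fun j _ => this j, hinv]
      simp [Matrix.one_apply]
    have hsl : ∀ l, ⟪P l, s⟫ = v l := by
      intro l
      rw [hs, inner_sum]
      have : ∀ m ∈ (univ : Finset (Fin b)), ⟪P l, c m • P m⟫ = c m * K l m := by
        intro m _
        rw [real_inner_smul_right, hKP]
      rw [Finset.sum_congr rfl this, hcv]
    rw [hs, sum_inner]
    have : ∀ l ∈ (univ : Finset (Fin b)), ⟪c l • P l, s⟫ = c l * v l := by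
      intro l _
      rw [real_inner_smul_left, hsl]
    rw [Finset.sum_congr rfl this, hS, Finset.sum_comm]
    refine Finset.sum_congr rfl fun l _ => ?_
    rw [hc, Finset.sum_mul]
  -- ⟪w, s⟫ identification with the mulVec expression
  have hws : ⟪w, s⟫ = ∑ j, v j * (K⁻¹.mulVec fun l => ⟪w, P l⟫) j := by
    have hmv : ∀ j, (K⁻¹.mulVec fun l => ⟪w, P l⟫) j = ∑ l, K⁻¹ j l * ⟪w, P l⟫ := by
      intro j
      simp [Matrix.mulVec, dotProduct]
    have h1 : ⟪w, s⟫ = ∑ l, c l * ⟪w, P l⟫ := by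
      rw [hs, inner_sum]
      exact Finset.sum_congr rfl fun l _ => real_inner_smul_right _ _ _
    have h2 : ∑ j, v j * (K⁻¹.mulVec fun l => ⟪w, P l⟫) j
        = ∑ l, c l * ⟪w, P l⟫ := by
      calc ∑ j, v j * (K⁻¹.mulVec fun l => ⟪w, P l⟫) j
          = ∑ j, ∑ l, v j * (K⁻¹ j l * ⟪w, P l⟫) := by
            refine Finset.sum_congr rfl fun j _ => ?_
            rw [hmv, Finset.mul_sum]
        _ = ∑ l, ∑ j, v j * (K⁻¹ j l * ⟪w, P l⟫) := Finset.sum_comm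
        _ = ∑ l, c l * ⟪w, P l⟫ := by
            refine Finset.sum_congr rfl fun l _ => ?_
            rw [hc, Finset.sum_mul]
            exact Finset.sum_congr rfl fun j _ => by ring
    rw [h1, h2]
  -- the error vector
  have hz : ⟪w, u - s⟫ = ⟪w, u⟫ - ∑ j, v j * (K⁻¹.mulVec fun l => ⟪w, P l⟫) j := by
    rw [inner_sub_right, hws]
  have hzz : ⟪u - s, u - s⟫ = ⟪u, u⟫ - S := by
    rw [inner_sub_right, inner_sub_left, inner_sub_left, hus, hss]
    have : ⟪s, u⟫ = S := by rw [real_inner_comm, hus]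
    rw [this]
    ring
  -- Cauchy-Schwarz
  have hCS := real_inner_mul_inner_self_le w (u - s)
  have hwwC : ⟪w, w⟫ ≤ C ^ 2 := by
    rw [real_inner_self_eq_norm_sq]
    have h0 : (0:ℝ) ≤ ‖w‖ := norm_nonneg w
    nlinarith
  have hzznn : (0:ℝ) ≤ ⟪u - s, u - s⟫ := real_inner_self_nonneg
  calc (⟪w, u⟫ - ∑ j, ⟪P j, u⟫ * (K⁻¹.mulVec fun l => ⟪w, P l⟫) j) ^ 2
      = ⟪w, u - s⟫ * ⟪w, u - s⟫ := by rw [hz]; ring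
    _ ≤ ⟪w, w⟫ * ⟪u - s, u - s⟫ := hCS
    _ ≤ C ^ 2 * ⟪u - s, u - s⟫ := mul_le_mul_of_nonneg_right hwwC hzznn
    _ = C ^ 2 * (⟪u, u⟫ - ∑ j, ∑ l, ⟪P j, u⟫ * K⁻¹ j l * ⟪P l, u⟫) := by rw [hzz, hS]

/-- Noiseless gradient bias bound for RKHS interpolation (Lemma 1 of Wu et al. 2024).
The RKHS of the `C²` kernel `k` is presented via a feature map `Φ` into a Hilbert space
`H`, with `f = ⟪w, Φ(·)⟫` and `‖w‖_H ≤ C`. With `K = k(D,D)` invertible and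
`g(θ) = ∇k(θ,D) K⁻¹ f(D)` the gradient of the minimum-norm interpolant, the squared
error `‖∇f(θ) − g(θ)‖²` is bounded by `C²` times the trace of the posterior gradient
covariance `∇k_D(θ,θ)∇ᵀ`. -/
theorem rkhs_gradient_bias_bound {d b : ℕ}
    {H : Type*} [NormedAddCommGroup H] [InnerProductSpace ℝ H]
    (k : EuclideanSpace ℝ (Fin d) → EuclideanSpace ℝ (Fin d) → ℝ)
    (hk : ContDiff ℝ 2 (fun p : EuclideanSpace ℝ (Fin d) × EuclideanSpace ℝ (Fin d) =>
      k p.1 p.2))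
    (Φ : EuclideanSpace ℝ (Fin d) → H) (hfeat : ∀ x y, k x y = ⟪Φ x, Φ y⟫)
    (w : H) (C : ℝ) (hw : ‖w‖ ≤ C)
    (f : EuclideanSpace ℝ (Fin d) → ℝ) (hf : ∀ x, f x = ⟪w, Φ x⟫)
    (D : Fin b → EuclideanSpace ℝ (Fin d))
    (K : Matrix (Fin b) (Fin b) ℝ) (hK : K = Matrix.of fun i j => k (D i) (D j))
    [Invertible K] (θ : EuclideanSpace ℝ (Fin d)) :
    ∑ i, (fderiv ℝ f θ (EuclideanSpace.single i 1)
        - ∑ j, fderiv ℝ (fun x => k x (D j)) θ (EuclideanSpace.single i 1)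
            * (K⁻¹.mulVec fun l => f (D l)) j) ^ 2
      ≤ C ^ 2 *
        ∑ i, (fderiv ℝ (fun y => fderiv ℝ (fun x => k x y) θ (EuclideanSpace.single i 1))
                θ (EuclideanSpace.single i 1)
          - ∑ j, ∑ l, fderiv ℝ (fun x => k x (D j)) θ (EuclideanSpace.single i 1)
              * K⁻¹ j l
              * fderiv ℝ (fun y => k (D l) y) θ (EuclideanSpace.single i 1)) := by
  classical
  obtain ⟨L, hL⟩ := feature_hasFDerivAt (fun p => k p.1 p.2) hk
    (fun x => ((Φ x : H) : UniformSpace.Completion H))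
    (fun x y => by
      rw [UniformSpace.Completion.inner_coe]
      exact (hfeat x y).symm) θ
  have hcomp : ∀ (z : UniformSpace.Completion H) (g : EuclideanSpace ℝ (Fin d) → ℝ),
      (∀ x, g x = ⟪z, ((Φ x : H) : UniformSpace.Completion H)⟫) → ∀ i : Fin d,
      fderiv ℝ g θ (EuclideanSpace.single i 1) = ⟪z, L (EuclideanSpace.single i 1)⟫ := by
    intro z g hg i
    have hgeq : g = fun x => (innerSL ℝ z) ((Φ x : H) : UniformSpace.Completion H) :=
      funext fun x => by rw [hg]; rfl
    have hder : HasFDerivAt g ((innerSL ℝ z).comp L) θ := by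
      rw [hgeq]
      exact ((innerSL ℝ z).hasFDerivAt.comp θ hL)
    rw [hder.fderiv]
    rfl
  have h1 : ∀ i : Fin d, fderiv ℝ f θ (EuclideanSpace.single i 1)
      = ⟪(w : UniformSpace.Completion H), L (EuclideanSpace.single i 1)⟫ :=
    hcomp _ f fun x => by
      rw [hf x]
      exact (UniformSpace.Completion.inner_coe w (Φ x)).symm
  have h2 : ∀ (y : EuclideanSpace ℝ (Fin d)) (i : Fin d),
      fderiv ℝ (fun x => k x y) θ (EuclideanSpace.single i 1)
      = ⟪((Φ y : H) : UniformSpace.Completion H), L (EuclideanSpace.single i 1)⟫ :=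
    fun y => hcomp _ _ fun x => by
      rw [hfeat x y, real_inner_comm]
      exact (UniformSpace.Completion.inner_coe (Φ y) (Φ x)).symm
  have h3 : ∀ (l : Fin b) (i : Fin d),
      fderiv ℝ (fun y => k (D l) y) θ (EuclideanSpace.single i 1)
      = ⟪((Φ (D l) : H) : UniformSpace.Completion H), L (EuclideanSpace.single i 1)⟫ :=
    fun l => hcomp _ _ fun y => by
      rw [hfeat (D l) y]
      exact (UniformSpace.Completion.inner_coe (Φ (D l)) (Φ y)).symm
  have h4 : ∀ i : Fin d,
      fderiv ℝ (fun y => fderiv ℝ (fun x => k x y) θ (EuclideanSpace.single i 1))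
        θ (EuclideanSpace.single i 1)
      = ⟪L (EuclideanSpace.single i 1), L (EuclideanSpace.single i 1)⟫ := by
    intro i
    exact hcomp _ _ (fun y => by rw [h2 y i]; exact real_inner_comm _ _) i
  have hKP : ∀ j l, K j l
      = ⟪((Φ (D j) : H) : UniformSpace.Completion H), ((Φ (D l) : H) : UniformSpace.Completion H)⟫ := by
    intro j l
    rw [hK]
    show k (D j) (D l) = _
    rw [hfeat]
    exact (UniformSpace.Completion.inner_coe _ _).symm
  have hfD : (fun l => f (D l))
      = fun l => ⟪(w : UniformSpace.Completion H), ((Φ (D l) : H) : UniformSpace.Completion H)⟫ :=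
    funext fun l => by
      rw [hf]
      exact (UniformSpace.Completion.inner_coe _ _).symm
  have hwb : ‖(w : UniformSpace.Completion H)‖ ≤ C := by
    rw [UniformSpace.Completion.norm_coe]; exact hw
  have main : ∀ i : Fin d,
      (fderiv ℝ f θ (EuclideanSpace.single i 1)
        - ∑ j, fderiv ℝ (fun x => k x (D j)) θ (EuclideanSpace.single i 1)
            * (K⁻¹.mulVec fun l => f (D l)) j) ^ 2
      ≤ C ^ 2 *
        (fderiv ℝ (fun y => fderiv ℝ (fun x => k x y) θ (EuclideanSpace.single i 1))
                θ (EuclideanSpace.single i 1)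
          - ∑ j, ∑ l, fderiv ℝ (fun x => k x (D j)) θ (EuclideanSpace.single i 1)
              * K⁻¹ j l
              * fderiv ℝ (fun y => k (D l) y) θ (EuclideanSpace.single i 1)) := by
    intro i
    rw [h1 i, h4 i, hfD]
    simp only [fun j => h2 (D j) i, h3]
    exact key_ineq (fun j => ((Φ (D j) : H) : UniformSpace.Completion H)) K hKP
      (w : UniformSpace.Completion H) (L (EuclideanSpace.single i 1)) C hwb
  calc ∑ i, (fderiv ℝ f θ (EuclideanSpace.single i 1)
        - ∑ j, fderiv ℝ (fun x => k x (D j)) θ (EuclideanSpace.single i 1)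
            * (K⁻¹.mulVec fun l => f (D l)) j) ^ 2
      ≤ ∑ i, C ^ 2 *
        (fderiv ℝ (fun y => fderiv ℝ (fun x => k x y) θ (EuclideanSpace.single i 1))
                θ (EuclideanSpace.single i 1)
          - ∑ j, ∑ l, fderiv ℝ (fun x => k x (D j)) θ (EuclideanSpace.single i 1)
              * K⁻¹ j l
              * fderiv ℝ (fun y => k (D l) y) θ (EuclideanSpace.single i 1)) :=
        Finset.sum_le_sum fun i _ => main i
    _ = _ := by rw [← Finset.mul_sum]
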